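/- arXiv:1709.04501 — 2 statements merged into one kernel-verified Lean document; each statement's English description precedes it below -/
import Mathlib

section
/- Let A ⊆ 𝕋 be a union of at most m intervals with μ(A) > 0, and suppose the integer n satisfies D_n(A) < min(1/2, μ(A)/(1 − 2/π)). Then |n| ≤ m / (2(μ(A) − (1 − 2/π) D_n(A))). -/
open Pointwise MeasureTheory

/-- A closed interval in `𝕋 = ℝ/ℤ`: the image of a closed interval of `ℝ`
under reduction modulo 1. -/
def IsClosedIntervalT (I : Set UnitAddCircle) : Prop :=
  ∃ a b : ℝ, I = (fun x : ℝ => (x : UnitAddCircle)) '' Set.Icc a b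

/-- An interval in `𝕋 = ℝ/ℤ`: the image of an interval (an order-connected set)
of `ℝ` under reduction modulo 1. -/
def IsIntervalT (I : Set UnitAddCircle) : Prop :=
  ∃ J : Set ℝ, J.OrdConnected ∧ I = (fun x : ℝ => (x : UnitAddCircle)) '' J

/-- The `n`-diameter of `A ⊆ 𝕋`: the infimum of `μ(I)` over closed intervals
`I ⊆ 𝕋` such that `n • A ⊆ I`. -/
noncomputable def nDiam (n : ℤ) (A : Set UnitAddCircle) : ℝ :=
  sInf {x : ℝ | ∃ I : Set UnitAddCircle,
    IsClosedIntervalT I ∧ n • A ⊆ I ∧ x = (volume I).toReal}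

section helpers
open Set

lemma mem_zsmul_set {α : Type*} [SubtractionMonoid α] {A : Set α} {a : α} (ha : a ∈ A) (n : ℤ) :
    n • a ∈ (n • A : Set α) := by
  cases n with
  | ofNat k =>
      have h : k • a ∈ (k • A : Set α) := Set.nsmul_mem_nsmul ha
      have e1 : (Int.ofNat k) • a = k • a := by
        rw [Int.ofNat_eq_coe, natCast_zsmul]
      have e2 : ((Int.ofNat k) • A : Set α) = (k • A : Set α) := rfl
      rw [e1, e2]; exact h
  | negSucc k =>
      have h : (k+1) • a ∈ ((k+1) • A : Set α) := Set.nsmul_mem_nsmul ha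
      have e1 : (Int.negSucc k) • a = -((k+1) • a) := negSucc_zsmul a k
      have e2 : ((Int.negSucc k) • A : Set α) = -(((k+1) • A : Set α)) := rfl
      rw [e1, e2]
      exact Set.neg_mem_neg.mpr h

lemma coe_eq_coe' (x y : ℝ) : (x : UnitAddCircle) = y ↔ ∃ k : ℤ, x = y + k := by
  constructor
  · intro h
    rw [QuotientAddGroup.eq_iff_sub_mem] at h
    obtain ⟨k, hk⟩ := AddSubgroup.mem_zmultiples_iff.mp h
    rw [zsmul_eq_mul, mul_one] at hk
    exact ⟨k, by linarith⟩
  · rintro ⟨k, rfl⟩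
    rw [QuotientAddGroup.eq_iff_sub_mem]
    exact AddSubgroup.mem_zmultiples_iff.mpr ⟨k, by rw [zsmul_eq_mul, mul_one]; ring⟩

lemma zsmul_coe (n : ℤ) (x : ℝ) : n • ((x : UnitAddCircle)) = ((n * x : ℝ) : UnitAddCircle) := by
  rw [← zsmul_eq_mul]
  exact (AddCircle.coe_zsmul ..).symm

lemma vol_arc {c d : ℝ} (hcd : c ≤ d) (h1 : d < c + 1) :
    volume ((fun x : ℝ => (x : UnitAddCircle)) '' Icc c d) = ENNReal.ofReal (d - c) := by
  have hmeas : MeasurableSet ((fun x : ℝ => (x : UnitAddCircle)) '' Icc c d) :=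
    (isCompact_Icc.image (AddCircle.continuous_mk' 1)).measurableSet
  rw [AddCircle.add_projection_respects_measure 1 c hmeas]
  have hset : (QuotientAddGroup.mk ⁻¹' ((fun x : ℝ => (x : UnitAddCircle)) '' Icc c d)
      ∩ Ioc c (c + 1)) = Ioc c d ∪ {c + 1} := by
    ext x
    simp only [mem_inter_iff, mem_preimage, mem_image, mem_Ioc, mem_union, mem_singleton_iff]
    constructor
    · rintro ⟨⟨y, ⟨hy1, hy2⟩, hyx⟩, hx1, hx2⟩
      obtain ⟨k, hk⟩ := (coe_eq_coe' y x).mp hyx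
      have hkle : k ≤ 0 := by
        by_contra h
        push_neg at h
        have h' : (1 : ℤ) ≤ k := h
        have : (1 : ℝ) ≤ (k : ℝ) := by exact_mod_cast h'
        linarith
      have hkge : -1 ≤ k := by
        by_contra h
        push_neg at h
        have h' : k ≤ -2 := by omega
        have : (k : ℝ) ≤ -2 := by exact_mod_cast h'
        linarith
      have hcase : k = 0 ∨ k = -1 := by omega
      rcases hcase with rfl | rfl
      · left
        refine ⟨hx1, ?_⟩
        push_cast at hk
        linarith
      · right
        push_cast at hk
        linarith
    · rintro (⟨hx1, hx2⟩ | rfl)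
      · exact ⟨⟨x, ⟨le_of_lt hx1, hx2⟩, rfl⟩, hx1, by linarith⟩
      · exact ⟨⟨c, ⟨le_refl c, hcd⟩, (coe_eq_coe' c (c+1)).mpr ⟨-1, by push_cast; ring⟩⟩,
          by linarith, le_refl _⟩
  rw [hset]
  apply le_antisymm
  · refine le_trans (measure_union_le _ _) ?_
    simp [Real.volume_Ioc]
  · rw [← Real.volume_Ioc (a := c) (b := d)]
    exact measure_mono subset_union_left

lemma arc_univ (a : ℝ) : (fun x : ℝ => (x : UnitAddCircle)) '' Icc a (a + 1) = univ :=
  AddCircle.coe_image_Icc_eq 1 a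

lemma arc_subset_arc {a b c d : ℝ} (hcd : c ≤ d) (hab : a ≤ b) (hb1 : b < a + 1)
    (h : (fun x : ℝ => (x : UnitAddCircle)) '' Icc c d ⊆
      (fun x : ℝ => (x : UnitAddCircle)) '' Icc a b) :
    d - c ≤ b - a := by
  by_cases hd1 : d < c + 1
  · have hm := measure_mono (μ := (volume : Measure UnitAddCircle)) h
    rw [vol_arc hcd hd1, vol_arc hab hb1] at hm
    have := (ENNReal.ofReal_le_ofReal_iff (by linarith)).mp hm
    linarith
  · exfalso
    push_neg at hd1
    have hsub : (fun x : ℝ => (x : UnitAddCircle)) '' Icc c (c + 1) ⊆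
        (fun x : ℝ => (x : UnitAddCircle)) '' Icc a b :=
      fun z hz => h (image_mono (Icc_subset_Icc_right hd1) hz)
    rw [arc_univ] at hsub
    have hm := measure_mono (μ := (volume : Measure UnitAddCircle)) hsub
    rw [vol_arc hab hb1] at hm
    simp only [UnitAddCircle.measure_univ] at hm
    have : (1:ℝ) ≤ b - a := by simpa using hm
    linarith

lemma interval_vol_le {J : Set ℝ} (hJ : J.OrdConnected) {n : ℤ} (hn : n ≠ 0) {a b : ℝ}
    (hab : a ≤ b) (hb1 : b < a + 1)
    (hsub : ∀ x ∈ J, n • ((x : UnitAddCircle)) ∈ (fun x : ℝ => (x : UnitAddCircle)) '' Icc a b) :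
    volume ((fun x : ℝ => (x : UnitAddCircle)) '' J) ≤ ENNReal.ofReal ((b - a) / |(n : ℝ)|) := by
  have hn' : ((n : ℝ)) ≠ 0 := by exact_mod_cast hn
  have hN : (0 : ℝ) < |(n : ℝ)| := abs_pos.mpr hn'
  have hN1 : (1 : ℝ) ≤ |(n : ℝ)| := by
    have : (1 : ℤ) ≤ |n| := Int.one_le_abs hn
    calc (1:ℝ) ≤ ((|n| : ℤ) : ℝ) := by exact_mod_cast this
      _ = |(n : ℝ)| := by push_cast; ring
  have key : ∀ x ∈ J, ∀ y ∈ J, x ≤ y → |(n : ℝ)| * (y - x) ≤ b - a := by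
    intro x hx y hy hxy
    have hsub2 : (fun t : ℝ => (t : UnitAddCircle)) '' Icc (min ((n:ℝ)*x) ((n:ℝ)*y)) (max ((n:ℝ)*x) ((n:ℝ)*y)) ⊆
        (fun t : ℝ => (t : UnitAddCircle)) '' Icc a b := by
      rintro _ ⟨z, hz, rfl⟩
      have hzz : (n : ℝ) * (z / n) = z := by field_simp
      have hw : z / n ∈ Icc x y := by
        rcases hn'.lt_or_gt with hneg | hpos
        · have h1 : min ((n:ℝ)*x) ((n:ℝ)*y) = (n:ℝ)*y := min_eq_right (by nlinarith)
          have h2 : max ((n:ℝ)*x) ((n:ℝ)*y) = (n:ℝ)*x := max_eq_left (by nlinarith)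
          rw [h1, h2] at hz
          constructor
          · rw [le_div_iff_of_neg hneg]; nlinarith [hz.2]
          · rw [div_le_iff_of_neg hneg]; nlinarith [hz.1]
        · have h1 : min ((n:ℝ)*x) ((n:ℝ)*y) = (n:ℝ)*x := min_eq_left (by nlinarith)
          have h2 : max ((n:ℝ)*x) ((n:ℝ)*y) = (n:ℝ)*y := max_eq_right (by nlinarith)
          rw [h1, h2] at hz
          constructor
          · rw [le_div_iff₀ hpos]; nlinarith [hz.1]
          · rw [div_le_iff₀ hpos]; nlinarith [hz.2]
      have hmem := hsub (z / n) (hJ.out hx hy hw)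
      rw [zsmul_coe, hzz] at hmem
      exact hmem
    have harc := arc_subset_arc min_le_max hab hb1 hsub2
    have habs : max ((n:ℝ)*x) ((n:ℝ)*y) - min ((n:ℝ)*x) ((n:ℝ)*y) = |(n:ℝ)| * (y - x) := by
      rw [max_sub_min_eq_abs, ← mul_sub, abs_mul,
        abs_of_nonneg (by linarith : (0:ℝ) ≤ y - x)]
    linarith [habs ▸ harc]
  rcases J.eq_empty_or_nonempty with rfl | ⟨x0, hx0⟩
  · simp
  · set t := (b - a) / |(n : ℝ)| with ht
    have ht0 : 0 ≤ t := div_nonneg (by linarith) hN.le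
    have ht1 : t < 1 := by
      have h : t ≤ b - a := div_le_self (by linarith) hN1
      linarith
    have key' : ∀ x ∈ J, ∀ y ∈ J, y - x ≤ t := by
      intro x hx y hy
      rcases le_total x y with h | h
      · have := key x hx y hy h
        rw [ht, le_div_iff₀ hN]
        linarith
      · linarith
    have hba : BddAbove J := ⟨x0 + t, fun y hy => by have := key' x0 hx0 y hy; linarith⟩
    have hbb : BddBelow J := ⟨x0 - t, fun y hy => by have := key' y hy x0 hx0; linarith⟩
    have hcd : sInf J ≤ sSup J := csInf_le_csSup ⟨x0, hx0⟩ hbb hba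
    have hdc : sSup J - sInf J ≤ t := by
      have h1 : sSup J ≤ sInf J + t := csSup_le ⟨x0, hx0⟩ (fun y hy => by
        have h2 : y - t ≤ sInf J := le_csInf ⟨x0, hx0⟩ (fun x hx => by
          have := key' x hx y hy; linarith)
        linarith)
      linarith
    calc volume ((fun x : ℝ => (x : UnitAddCircle)) '' J)
        ≤ volume ((fun x : ℝ => (x : UnitAddCircle)) '' Icc (sInf J) (sSup J)) :=
          measure_mono (image_mono (fun x hx => ⟨csInf_le hbb hx, le_csSup hba hx⟩))
      _ = ENNReal.ofReal (sSup J - sInf J) := vol_arc hcd (by linarith)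
      _ ≤ ENNReal.ofReal t := ENNReal.ofReal_le_ofReal hdc

end helpers

open Set in
theorem stmt_6 (m : ℕ) (A : Set UnitAddCircle)
    (f : Fin m → Set UnitAddCircle) (hf : ∀ i, IsIntervalT (f i))
    (hA : A = ⋃ i, f i) (hA0 : 0 < (volume A).toReal)
    (n : ℤ)
    (hD : nDiam n A < min (1 / 2) ((volume A).toReal / (1 - 2 / Real.pi))) :
    |(n : ℝ)| ≤ m / (2 * ((volume A).toReal - (1 - 2 / Real.pi) * nDiam n A)) := by
  have hπ : (2:ℝ) < Real.pi := by have := Real.pi_gt_three; linarith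
  have hc : 0 < 1 - 2 / Real.pi := by
    have h1 : 2 / Real.pi < 1 := (div_lt_one (by linarith)).mpr hπ
    linarith
  have hD0 : 0 ≤ nDiam n A := by
    apply Real.sInf_nonneg
    rintro x ⟨I, hI, hIA, rfl⟩
    exact ENNReal.toReal_nonneg
  have hcD : (1 - 2/Real.pi) * nDiam n A < (volume A).toReal := by
    have h2 := lt_of_lt_of_le hD (min_le_right _ _)
    have h3 := (lt_div_iff₀ hc).mp h2
    nlinarith
  have hden : 0 < 2 * ((volume A).toReal - (1 - 2/Real.pi) * nDiam n A) := by linarith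
  rcases eq_or_ne n 0 with rfl | hn
  · simp only [Int.cast_zero, abs_zero]
    exact div_nonneg (Nat.cast_nonneg m) hden.le
  have hSne : Set.Nonempty {x : ℝ | ∃ I : Set UnitAddCircle,
      IsClosedIntervalT I ∧ n • A ⊆ I ∧ x = (volume I).toReal} := by
    refine ⟨(volume (univ : Set UnitAddCircle)).toReal, univ, ⟨0, 1, ?_⟩, subset_univ _, rfl⟩
    have h := arc_univ 0
    rw [zero_add] at h
    exact h.symm
  have hhalf : nDiam n A < 1/2 := lt_of_lt_of_le hD (min_le_left _ _)
  obtain ⟨x, hxS, hx2⟩ := exists_lt_of_csInf_lt hSne hhalf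
  obtain ⟨I, ⟨a, b, rfl⟩, hIA, rfl⟩ := hxS
  rcases lt_or_ge b a with hba | hab
  · exfalso
    rw [Icc_eq_empty (not_le.mpr hba), image_empty] at hIA
    have hAne : A.Nonempty := nonempty_of_measure_ne_zero
      (fun h => by rw [h] at hA0; simp at hA0)
    obtain ⟨a0, ha0⟩ := hAne
    exact hIA (mem_zsmul_set ha0 n)
  rcases lt_or_ge b (a+1) with hb1 | hb1
  swap
  · exfalso
    have hsub : (fun x : ℝ => (x : UnitAddCircle)) '' Icc a (a+1) ⊆
        (fun x : ℝ => (x : UnitAddCircle)) '' Icc a b :=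
      image_mono (Icc_subset_Icc_right hb1)
    rw [arc_univ] at hsub
    have hIuniv : (fun x : ℝ => (x : UnitAddCircle)) '' Icc a b = univ :=
      univ_subset_iff.mp hsub
    rw [hIuniv] at hx2
    rw [UnitAddCircle.measure_univ] at hx2
    norm_num at hx2
  have hxval : ((volume ((fun x : ℝ => (x : UnitAddCircle)) '' Icc a b)).toReal) = b - a := by
    rw [vol_arc hab hb1, ENNReal.toReal_ofReal (by linarith)]
  rw [hxval] at hx2
  have hNpos : (0:ℝ) < |(n:ℝ)| := abs_pos.mpr (by exact_mod_cast hn)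
  have hfi : ∀ i, volume (f i) ≤ ENNReal.ofReal ((b-a)/|(n:ℝ)|) := by
    intro i
    obtain ⟨J, hJ, hJeq⟩ := hf i
    rw [hJeq]
    apply interval_vol_le hJ hn hab hb1
    intro x hx
    apply hIA
    have hxA : (x : UnitAddCircle) ∈ A := by
      rw [hA]
      exact mem_iUnion.mpr ⟨i, hJeq ▸ mem_image_of_mem _ hx⟩
    exact mem_zsmul_set hxA n
  have hvol : volume A ≤ (m : ENNReal) * ENNReal.ofReal ((b-a)/|(n:ℝ)|) := by
    rw [hA]
    refine le_trans (measure_iUnion_fintype_le _ _) ?_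
    calc ∑ i, volume (f i) ≤ ∑ _i : Fin m, ENNReal.ofReal ((b-a)/|(n:ℝ)|) :=
          Finset.sum_le_sum (fun i _ => hfi i)
      _ = (m : ENNReal) * ENNReal.ofReal ((b-a)/|(n:ℝ)|) := by
          rw [Finset.sum_const, Finset.card_univ, Fintype.card_fin, nsmul_eq_mul]
  have hreal : (volume A).toReal ≤ m * ((b-a)/|(n:ℝ)|) := by
    have hne : ((m : ENNReal) * ENNReal.ofReal ((b-a)/|(n:ℝ)|)) ≠ ⊤ :=
      ENNReal.mul_ne_top (ENNReal.natCast_ne_top m) ENNReal.ofReal_ne_top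
    calc (volume A).toReal ≤ ((m : ENNReal) * ENNReal.ofReal ((b-a)/|(n:ℝ)|)).toReal :=
          ENNReal.toReal_mono hne hvol
      _ = m * ((b-a)/|(n:ℝ)|) := by
          rw [ENNReal.toReal_mul, ENNReal.toReal_natCast,
            ENNReal.toReal_ofReal (div_nonneg (by linarith) hNpos.le)]
  have hNμ : |(n:ℝ)| * (volume A).toReal ≤ m * (b - a) := by
    rw [mul_div_assoc'] at hreal
    have := (le_div_iff₀ hNpos).mp hreal
    nlinarith
  rw [le_div_iff₀ hden]
  nlinarith [mul_nonneg hNpos.le (mul_nonneg hc.le hD0),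
    mul_nonneg (Nat.cast_nonneg (α := ℝ) m) (by linarith : (0:ℝ) ≤ 1/2 - (b-a))]
end

section
/- Let p be a prime and let B ⊆ ℤ/pℤ be a union of at most m intervals with |B|/p = β > 0. Suppose n ∈ ℤ/pℤ satisfies D_n(B) < min(1/2, β/(1 − 2/π)). Then |n|_p ≤ m / (2(β − (1 − 2/π) D_n(B))). -/
open Pointwise

/-- An interval in `ℤ/pℤ`: an arithmetic progression of common difference 1. -/
def IsIntervalZMod {p : ℕ} (I : Finset (ZMod p)) : Prop :=
  ∃ (a : ZMod p) (l : ℕ), I = (Finset.range l).image fun k : ℕ => a + (k : ZMod p)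

/-- The `n`-diameter of `B ⊆ ℤ/pℤ`: the infimum of `|I|/p` over intervals
`I ⊆ ℤ/pℤ` such that `n • B ⊆ I`. -/
noncomputable def nDiamZMod {p : ℕ} (n : ZMod p) (B : Finset (ZMod p)) : ℝ :=
  sInf {x : ℝ | ∃ I : Finset (ZMod p),
    IsIntervalZMod I ∧ n • B ⊆ I ∧ x = (I.card : ℝ) / p}
open Finset Complex

noncomputable def eZ (p : ℕ) (x : ZMod p) : ℂ :=
  Complex.exp ((2 * Real.pi * (ZMod.val x : ℝ) / p : ℝ) * Complex.I)

lemma eZ_add (p : ℕ) [NeZero p] (x y : ZMod p) : eZ p (x + y) = eZ p x * eZ p y := by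
  have hp : (p:ℝ) ≠ 0 := Nat.cast_ne_zero.2 (NeZero.ne p)
  have hval : ((x + y).val : ℝ) + p * (((x.val + y.val) / p : ℕ) : ℝ)
      = (x.val : ℝ) + y.val := by
    have := Nat.mod_add_div (x.val + y.val) p
    have h2 : (x+y).val = (x.val + y.val) % p := ZMod.val_add x y
    push_cast [h2]
    exact_mod_cast congrArg (Nat.cast : ℕ → ℝ) this
  set j : ℕ := (x.val + y.val) / p with hj
  have h1 : eZ p x * eZ p y = eZ p (x + y) * Complex.exp ((j:ℂ) * (2 * Real.pi * Complex.I)) := by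
    rw [eZ, eZ, eZ, ← Complex.exp_add, ← Complex.exp_add]
    congr 1
    have key : ∀ (u v w jr pr : ℝ), pr ≠ 0 → u + pr * jr = v + w →
        2*Real.pi*u/pr + jr*(2*Real.pi) = 2*Real.pi*v/pr + 2*Real.pi*w/pr := by
      intro u v w jr pr hpr h
      field_simp
      linear_combination h
    have hre : (2*Real.pi*((x+y).val:ℝ)/p) + (j:ℝ)*(2*Real.pi)
        = (2*Real.pi*(x.val:ℝ)/p) + (2*Real.pi*(y.val:ℝ)/p) :=
      key _ _ _ _ _ hp hval
    rw [← add_mul, ← Complex.ofReal_add, ← hre, Complex.ofReal_add, add_mul]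
    congr 1
    push_cast
    ring
  rw [h1, Complex.exp_nat_mul_two_pi_mul_I, mul_one]

lemma eZ_zero (p : ℕ) [NeZero p] : eZ p 0 = 1 := by
  simp [eZ]

lemma eZ_natCast_mul (p : ℕ) [NeZero p] (n : ZMod p) (k : ℕ) :
    eZ p (n * (k : ZMod p)) = (eZ p n) ^ k := by
  induction k with
  | zero => simpa using eZ_zero p
  | succ k ih =>
    push_cast
    rw [mul_add, mul_one, eZ_add, ih, pow_succ]

lemma abs_eZ (p : ℕ) (x : ZMod p) : ‖eZ p x‖ = 1 :=
  Complex.norm_exp_ofReal_mul_I _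

lemma abs_exp_mul_I_sub_one (ψ : ℝ) :
    ‖Complex.exp ((ψ:ℂ) * Complex.I) - 1‖ = 2 * |Real.sin (ψ/2)| := by
  rw [Complex.norm_def, Complex.normSq_apply, Real.abs_sin_half]
  simp only [Complex.sub_re, Complex.sub_im, Complex.one_re, Complex.one_im,
    Complex.exp_ofReal_mul_I_re, Complex.exp_ofReal_mul_I_im]
  rw [show (Real.cos ψ - 1) * (Real.cos ψ - 1) + (Real.sin ψ - 0) * (Real.sin ψ - 0)
      = 4 * ((1 - Real.cos ψ)/2) from by nlinarith [Real.sin_sq_add_cos_sq ψ]]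
  rw [show (4 : ℝ) * ((1 - Real.cos ψ)/2) = 2^2 * ((1 - Real.cos ψ)/2) from by norm_num,
    Real.sqrt_mul (by norm_num), Real.sqrt_sq (by norm_num)]

lemma dirichlet_sum (θ : ℝ) (hθ : Real.sin θ ≠ 0) (L : ℕ) :
    ∑ k ∈ Finset.range L, Real.cos ((2*(k:ℝ) - L + 1) * θ)
      = Real.sin (L * θ) / Real.sin θ := by
  have key : ∀ k : ℕ, Real.sin ((2*((k:ℝ)+1) - L) * θ) - Real.sin ((2*(k:ℝ) - L) * θ)
      = 2 * Real.sin θ * Real.cos ((2*(k:ℝ) - L + 1) * θ) := by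
    intro k
    have e1 : (2*((k:ℝ)+1) - L) * θ = (2*(k:ℝ) - L + 1)*θ + θ := by ring
    have e2 : (2*(k:ℝ) - L) * θ = (2*(k:ℝ) - L + 1)*θ - θ := by ring
    rw [e1, e2, Real.sin_add, Real.sin_sub]; ring
  have tel := Finset.sum_range_sub (fun k : ℕ => Real.sin ((2*(k:ℝ) - L)*θ)) L
  have h2 : ∑ k ∈ Finset.range L, (2 * Real.sin θ * Real.cos ((2*(k:ℝ) - L + 1) * θ))
      = 2 * Real.sin (L * θ) := by
    have : ∀ k ∈ Finset.range L,
        (2 * Real.sin θ * Real.cos ((2*(k:ℝ) - L + 1) * θ))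
        = Real.sin ((2*((k:ℝ)+1) - L) * θ) - Real.sin ((2*(k:ℝ) - L) * θ) := by
      intro k _; rw [key]
    rw [Finset.sum_congr rfl this]
    have h3 : ∑ k ∈ Finset.range L,
        (Real.sin ((2*((k:ℝ)+1) - L) * θ) - Real.sin ((2*(k:ℝ) - L) * θ))
        = Real.sin ((2*(L:ℝ) - L)*θ) - Real.sin ((2*(0:ℝ) - L)*θ) := by
      simpa using tel
    rw [h3]
    rw [show (2*(0:ℝ) - L)*θ = -((2*(L:ℝ) - L)*θ) from by ring, Real.sin_neg]
    rw [show (2*(L:ℝ) - L)*θ = (L:ℝ)*θ from by ring]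
    ring
  rw [← Finset.mul_sum] at h2
  field_simp
  linarith [h2]
open Finset Complex

lemma sum_biUnion_le' {ι α : Type*} [DecidableEq ι] [DecidableEq α] (s : Finset ι)
    (f : ι → Finset α) (g : α → ℝ) (hg : ∀ x, 0 ≤ g x) :
    ∑ x ∈ s.biUnion f, g x ≤ ∑ i ∈ s, ∑ x ∈ f i, g x := by
  induction s using Finset.induction with
  | empty => simp
  | @insert a s ha ih =>
    rw [Finset.biUnion_insert, Finset.sum_insert ha]
    have hsub : ∑ x ∈ s.biUnion f \ f a, g x ≤ ∑ x ∈ s.biUnion f, g x :=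
      Finset.sum_le_sum_of_subset_of_nonneg Finset.sdiff_subset (fun x _ _ => hg x)
    rw [show f a ∪ s.biUnion f = f a ∪ (s.biUnion f \ f a) from
      (Finset.union_sdiff_self_eq_union).symm, Finset.sum_union Finset.disjoint_sdiff]
    linarith [ih]

lemma geom_bound (p : ℕ) [NeZero p] (hp2 : 2 ≤ p) (n : ZMod p) (hn : n ≠ 0) (l : ℕ) :
    ‖∑ k ∈ Finset.range l, (eZ p n) ^ k‖
      ≤ (p : ℝ) / (2 * n.valMinAbs.natAbs) := by
  set q : ℕ := n.valMinAbs.natAbs with hq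
  have hppos : (0:ℝ) < p := by positivity
  have hpne : (p:ℝ) ≠ 0 := hppos.ne'
  have hq1 : 1 ≤ q := by
    rcases Nat.eq_zero_or_pos q with h | h
    · exact absurd (by simpa [hq, Int.natAbs_eq_zero, ZMod.valMinAbs_eq_zero] using h) hn
    · exact h
  have hq2 : 2 * q ≤ p := by
    have := ZMod.natAbs_valMinAbs_le n
    omega
  have hv0 : 0 < n.val := Nat.pos_of_ne_zero fun h => hn (ZMod.val_injective p (by simp [h]))
  have hvp : n.val < p := ZMod.val_lt n
  have hcase : q = n.val ∨ q = p - n.val := by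
    have h := ZMod.valMinAbs_def_pos n
    rcases le_or_gt n.val (p/2) with hle | hgt
    · left; rw [hq, h, if_pos hle]; exact Int.natAbs_natCast _
    · right; rw [hq, h, if_neg (not_le.2 hgt)]; omega
  have hsin_eq : Real.sin (Real.pi * n.val / p) = Real.sin (Real.pi * q / p) := by
    rcases hcase with h | h
    · rw [h]
    · rw [h, Nat.cast_sub hvp.le,
        show Real.pi * ((p:ℝ) - n.val) / p = Real.pi - Real.pi * n.val / p from by
          field_simp,
        Real.sin_pi_sub]
  have hsinpos : 0 < Real.sin (Real.pi * n.val / p) := by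
    apply Real.sin_pos_of_pos_of_lt_pi
    · positivity
    · rw [div_lt_iff₀ hppos]
      have : (n.val : ℝ) < p := by exact_mod_cast hvp
      nlinarith [Real.pi_pos]
  have hsinq : 2 * (q:ℝ) / p ≤ Real.sin (Real.pi * n.val / p) := by
    rw [hsin_eq]
    have h1 : Real.pi * q / p ≤ Real.pi / 2 := by
      rw [div_le_div_iff₀ hppos two_pos]
      have : 2 * (q:ℝ) ≤ p := by exact_mod_cast hq2
      nlinarith [Real.pi_pos]
    have h2 := Real.mul_le_sin (x := Real.pi * q / p) (by positivity) h1
    have : 2 / Real.pi * (Real.pi * q / p) = 2 * q / p := by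
      field_simp
    linarith [this ▸ h2]
  -- w ≠ 1
  have hwne : eZ p n ≠ 1 := by
    set vr : ℝ := (n.val : ℝ) with hvr
    have hvr0 : 0 < vr := by rw [hvr]; exact_mod_cast hv0
    have hvrp : vr < p := by rw [hvr]; exact_mod_cast hvp
    intro h
    rw [eZ] at h
    obtain ⟨j, hj⟩ := Complex.exp_eq_one_iff.1 h
    have him := congrArg Complex.im hj
    simp only [Complex.mul_im, Complex.mul_re, Complex.ofReal_re, Complex.ofReal_im,
      Complex.I_re, Complex.I_im, Complex.intCast_re, Complex.intCast_im,
      Complex.ofReal_ofNat, mul_one, Complex.re_ofNat, Complex.im_ofNat] at him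
    have him' : 2 * Real.pi * vr / p = (j:ℝ) * (2 * Real.pi) := by
      rw [hvr]; push_cast at him ⊢; linarith [him]
    have him'' : (2*Real.pi) * vr = (2*Real.pi) * ((j:ℝ) * p) := by
      field_simp at him'
      linear_combination (2*Real.pi) * him'
    have hv : vr = (j:ℝ) * p :=
      mul_left_cancel₀ (by positivity) him''
    have h1 : (0:ℝ) < (j:ℝ) * p := hv ▸ hvr0
    have h2 : (0:ℝ) < (j:ℝ) := by
      rcases le_or_gt (j:ℝ) 0 with hc | hc
      · exact absurd (mul_nonpos_of_nonpos_of_nonneg hc hppos.le) (not_le.2 h1)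
      · exact hc
    have hj2 : (0:ℤ) < j := by exact_mod_cast h2
    have h3 : (1:ℝ) ≤ (j:ℝ) := by exact_mod_cast hj2
    nlinarith
  rw [geom_sum_eq hwne, norm_div]
  have hnum : ‖eZ p n ^ l - 1‖ ≤ 2 := by
    calc ‖eZ p n ^ l - 1‖ ≤ ‖eZ p n ^ l‖ + ‖(1:ℂ)‖ :=
          norm_sub_le _ _
    _ = 2 := by rw [norm_pow, abs_eZ]; norm_num
  have hden : ‖eZ p n - 1‖ = 2 * Real.sin (Real.pi * n.val / p) := by
    have := abs_exp_mul_I_sub_one (2 * Real.pi * n.val / p)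
    rw [show (2 * Real.pi * (n.val:ℝ) / p) / 2 = Real.pi * n.val / p from by ring] at this
    rw [eZ, this, abs_of_pos hsinpos]
  have hdenpos : 0 < ‖eZ p n - 1‖ := by rw [hden]; positivity
  have hqpos : (0:ℝ) < q := by exact_mod_cast hq1
  calc ‖eZ p n ^ l - 1‖ / ‖eZ p n - 1‖
      ≤ 2 / (2 * (2 * q / p)) := by
        apply div_le_div₀ (by norm_num) hnum (by positivity)
        rw [hden]
        have := hsinq
        nlinarith
    _ = (p:ℝ) / (2 * q) := by field_simp
lemma main_aux (p : ℕ) (hp : p.Prime) (m : ℕ) (f : Fin m → Finset (ZMod p))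
    (hf : ∀ i, IsIntervalZMod (f i)) (B : Finset (ZMod p))
    (hB : B = Finset.univ.biUnion f)
    (n : ZMod p) (hn : n ≠ 0) (a : ZMod p) (L : ℕ) (hL : 2 * L < p)
    (hmem : ∀ x ∈ B, (n * x - a).val < L) :
    (B.card : ℝ) - (1 - 2 / Real.pi) * L ≤ m * p / (2 * n.valMinAbs.natAbs) := by
  haveI : Fact p.Prime := ⟨hp⟩
  haveI : NeZero p := ⟨hp.ne_zero⟩
  have hp2 : 2 ≤ p := hp.two_le
  have hppos : (0:ℝ) < p := by positivity
  have hpne : (p:ℝ) ≠ 0 := hppos.ne'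
  have hπ := Real.pi_pos
  set θ : ℝ := Real.pi / p with hθdef
  have hθpos : 0 < θ := by positivity
  have hθsin : 0 < Real.sin θ := by
    apply Real.sin_pos_of_pos_of_lt_pi hθpos
    rw [hθdef, div_lt_iff₀ hppos]
    have : (2:ℝ) ≤ p := by exact_mod_cast hp2
    nlinarith
  set k : ZMod p → ℕ := fun x => (n * x - a).val with hk
  have hrep : ∀ x ∈ B, n * x = a + ((k x : ℕ) : ZMod p) := by
    intro x _
    rw [hk]
    simp [ZMod.natCast_val, ZMod.cast_id]
  have hkinj : Set.InjOn k B := by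
    intro x hx y hy hxy
    have h1 : n * x = n * y := by rw [hrep x hx, hrep y hy, hxy]
    exact mul_left_cancel₀ hn h1
  have hL2 : (2:ℝ) * L ≤ p := by exact_mod_cast hL.le
  have hLθ : (L:ℝ) * θ ≤ Real.pi / 2 := by
    rw [hθdef, show (L:ℝ) * (Real.pi / p) = ((L:ℝ) * Real.pi) / p from by ring,
      div_le_div_iff₀ hppos two_pos]
    nlinarith
  have hcard : (B.card : ℝ) ≤ L := by
    have h1 : B.card = (B.image k).card := (Finset.card_image_of_injOn hkinj).symm
    have h2 : B.image k ⊆ Finset.range L := by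
      intro j hj
      obtain ⟨x, hx, rfl⟩ := Finset.mem_image.1 hj
      exact Finset.mem_range.2 (hmem x hx)
    have := Finset.card_le_card h2
    rw [Finset.card_range] at this
    exact_mod_cast h1 ▸ this
  -- Step A
  have stepA : (B.card : ℝ) - (1 - 2 / Real.pi) * L
      ≤ ∑ x ∈ B, Real.cos ((2*((k x : ℕ):ℝ) - L + 1) * θ) := by
    have hsumA : ∑ x ∈ B, (1 - Real.cos ((2*((k x : ℕ):ℝ) - L + 1) * θ))
        ≤ (1 - 2 / Real.pi) * L := by
      have himg : B.image k ⊆ Finset.range L := by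
        intro j hj
        obtain ⟨x, hx, rfl⟩ := Finset.mem_image.1 hj
        exact Finset.mem_range.2 (hmem x hx)
      have h1 : ∑ j ∈ B.image k, (1 - Real.cos ((2*(j:ℝ) - L + 1) * θ))
          = ∑ x ∈ B, (1 - Real.cos ((2*((k x : ℕ):ℝ) - L + 1) * θ)) :=
        Finset.sum_image (fun x hx y hy h => hkinj hx hy h)
      rw [← h1]
      have h2 : ∑ j ∈ B.image k, (1 - Real.cos ((2*(j:ℝ) - L + 1) * θ))
          ≤ ∑ j ∈ Finset.range L, (1 - Real.cos ((2*(j:ℝ) - L + 1) * θ)) :=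
        Finset.sum_le_sum_of_subset_of_nonneg himg
          (fun j _ _ => by linarith [Real.cos_le_one ((2*(j:ℝ) - L + 1) * θ)])
      refine h2.trans ?_
      rw [Finset.sum_sub_distrib, Finset.sum_const, Finset.card_range,
        dirichlet_sum θ hθsin.ne' L]
      have hs1 : 2/Real.pi * ((L:ℝ)*θ) ≤ Real.sin ((L:ℝ)*θ) :=
        Real.mul_le_sin (by positivity) hLθ
      have hs2 : Real.sin θ ≤ θ := Real.sin_le hθpos.le
      have hs3 : 2/Real.pi*(L:ℝ) ≤ Real.sin ((L:ℝ)*θ) / Real.sin θ := by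
        rw [le_div_iff₀ hθsin]
        have hnn : (0:ℝ) ≤ 2/Real.pi*(L:ℝ) := by positivity
        nlinarith
      simp only [nsmul_eq_mul, mul_one]
      linarith
    have hexp : ∑ x ∈ B, (1 - Real.cos ((2*((k x : ℕ):ℝ) - L + 1) * θ))
        = (B.card:ℝ) - ∑ x ∈ B, Real.cos ((2*((k x : ℕ):ℝ) - L + 1) * θ) := by
      rw [Finset.sum_sub_distrib, Finset.sum_const, nsmul_eq_mul, mul_one]
    linarith [hexp ▸ hsumA]
  -- cos nonneg on B
  have hcosnn : ∀ x ∈ B, 0 ≤ Real.cos ((2*((k x : ℕ):ℝ) - L + 1) * θ) := by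
    intro x hx
    apply Real.cos_nonneg_of_mem_Icc
    have hkx : ((k x : ℕ):ℝ) ≤ (L:ℝ) - 1 := by
      have := hmem x hx
      have : (k x : ℕ) + 1 ≤ L := this
      have h' : ((k x : ℕ):ℝ) + 1 ≤ L := by exact_mod_cast this
      linarith
    have hkx0 : (0:ℝ) ≤ ((k x : ℕ):ℝ) := by positivity
    constructor
    · nlinarith
    · nlinarith
  -- Step B
  have hfB : ∀ i, f i ⊆ B := fun i => hB ▸ Finset.subset_biUnion_of_mem f (Finset.mem_univ i)
  have stepB : ∑ x ∈ B, Real.cos ((2*((k x : ℕ):ℝ) - L + 1) * θ)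
      ≤ ∑ i : Fin m, ∑ x ∈ f i, Real.cos ((2*((k x : ℕ):ℝ) - L + 1) * θ) := by
    set G : ZMod p → ℝ := fun x => |Real.cos ((2*((k x : ℕ):ℝ) - L + 1) * θ)| with hG
    have hGB : ∀ x ∈ B, G x = Real.cos ((2*((k x : ℕ):ℝ) - L + 1) * θ) :=
      fun x hx => abs_of_nonneg (hcosnn x hx)
    calc ∑ x ∈ B, Real.cos ((2*((k x : ℕ):ℝ) - L + 1) * θ)
        = ∑ x ∈ B, G x := (Finset.sum_congr rfl hGB).symm
      _ ≤ ∑ i : Fin m, ∑ x ∈ f i, G x := by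
          rw [hB]; exact sum_biUnion_le' _ _ _ (fun x => abs_nonneg _)
      _ = ∑ i : Fin m, ∑ x ∈ f i, Real.cos ((2*((k x : ℕ):ℝ) - L + 1) * θ) :=
          Finset.sum_congr rfl (fun i _ =>
            Finset.sum_congr rfl (fun x hx => hGB x (hfB i hx)))
  -- Step C
  have hexpmul : ∀ r s : ℝ, Complex.exp ((r:ℂ) * Complex.I) * Complex.exp ((s:ℂ) * Complex.I)
      = Complex.exp (((r + s : ℝ):ℂ) * Complex.I) := by
    intro r s; rw [← Complex.exp_add]; push_cast; ring_nf
  set φ : ℂ := Complex.exp (((-(2*Real.pi*((a.val : ℕ):ℝ)/p) - ((L:ℝ)-1)*θ : ℝ):ℂ) * Complex.I)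
    with hφ
  have hφabs : ‖φ‖ = 1 := Complex.norm_exp_ofReal_mul_I _
  have hre : ∀ x ∈ B, (φ * eZ p (n*x)).re = Real.cos ((2*((k x : ℕ):ℝ) - L + 1) * θ) := by
    intro x hx
    have hkxL : (k x : ℕ) < p := lt_trans (hmem x hx) (by omega)
    have h1 : eZ p (n*x) = Complex.exp (((2*Real.pi*((a.val : ℕ):ℝ)/p
        + 2*Real.pi*((k x : ℕ):ℝ)/p : ℝ):ℂ) * Complex.I) := by
      rw [hrep x hx, eZ_add]
      rw [show eZ p ((k x : ℕ) : ZMod p)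
          = Complex.exp (((2*Real.pi*((k x : ℕ):ℝ)/p : ℝ):ℂ) * Complex.I) from by
        rw [eZ, ZMod.val_cast_of_lt hkxL]]
      rw [eZ, hexpmul]
    rw [h1, hφ, hexpmul, Complex.exp_ofReal_mul_I_re]
    congr 1
    rw [hθdef]
    field_simp
    ring
  set q : ℕ := n.valMinAbs.natAbs with hq
  have stepC : ∀ i : Fin m, ∑ x ∈ f i, Real.cos ((2*((k x : ℕ):ℝ) - L + 1) * θ)
      ≤ (p:ℝ) / (2 * q) := by
    intro i
    obtain ⟨b, l, hfi⟩ := hf i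
    have hcardfi : (f i).card ≤ L := by
      have h1 := Finset.card_le_card (hfB i)
      have : (B.card:ℝ) ≤ L := hcard
      have : B.card ≤ L := by exact_mod_cast this
      omega
    have hlp : l < p := by
      by_contra hc
      push_neg at hc
      have huniv : Finset.univ ⊆ f i := by
        intro x _
        rw [hfi]
        refine Finset.mem_image.2 ⟨(x - b).val, Finset.mem_range.2 ?_, ?_⟩
        · exact lt_of_lt_of_le (ZMod.val_lt _) hc
        · simp [ZMod.natCast_val, ZMod.cast_id]
      have := Finset.card_le_card huniv
      rw [Finset.card_univ, ZMod.card] at this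
      omega
    have hinjl : Set.InjOn (fun j : ℕ => b + (j : ZMod p)) (Finset.range l) := by
      intro j1 h1 j2 h2 h
      simp only at h
      have : (j1 : ZMod p) = (j2 : ZMod p) := by
        have := add_left_cancel h
        exact this
      have hv := congrArg ZMod.val this
      rwa [ZMod.val_cast_of_lt (lt_trans (Finset.mem_range.1 h1) hlp),
        ZMod.val_cast_of_lt (lt_trans (Finset.mem_range.1 h2) hlp)] at hv
    have hsum : ∑ x ∈ f i, eZ p (n * x)
        = eZ p (n * b) * ∑ j ∈ Finset.range l, (eZ p n) ^ j := by
      rw [hfi, Finset.sum_image hinjl, Finset.mul_sum]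
      refine Finset.sum_congr rfl (fun j _ => ?_)
      rw [mul_add, eZ_add, eZ_natCast_mul]
    calc ∑ x ∈ f i, Real.cos ((2*((k x : ℕ):ℝ) - L + 1) * θ)
        = (φ * ∑ x ∈ f i, eZ p (n*x)).re := by
          rw [Finset.mul_sum, Complex.re_sum]
          exact Finset.sum_congr rfl (fun x hx => (hre x (hfB i hx)).symm)
      _ ≤ ‖φ * ∑ x ∈ f i, eZ p (n*x)‖ := Complex.re_le_norm _
      _ = ‖∑ x ∈ f i, eZ p (n*x)‖ := by rw [norm_mul, hφabs, one_mul]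
      _ = ‖∑ j ∈ Finset.range l, (eZ p n) ^ j‖ := by
          rw [hsum, norm_mul, abs_eZ, one_mul]
      _ ≤ (p:ℝ) / (2 * q) := geom_bound p hp2 n hn l
  -- combine
  calc (B.card : ℝ) - (1 - 2 / Real.pi) * L
      ≤ ∑ x ∈ B, Real.cos ((2*((k x : ℕ):ℝ) - L + 1) * θ) := stepA
    _ ≤ ∑ i : Fin m, ∑ x ∈ f i, Real.cos ((2*((k x : ℕ):ℝ) - L + 1) * θ) := stepB
    _ ≤ ∑ _i : Fin m, (p:ℝ) / (2 * q) := Finset.sum_le_sum (fun i _ => stepC i)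
    _ = m * ((p:ℝ) / (2 * q)) := by rw [Finset.sum_const, Finset.card_univ,
          Fintype.card_fin, nsmul_eq_mul]
    _ = m * p / (2 * q) := by ring
theorem stmt_7 (p : ℕ) (hp : p.Prime) (m : ℕ) (B : Finset (ZMod p))
    (f : Fin m → Finset (ZMod p)) (hf : ∀ i, IsIntervalZMod (f i))
    (hB : B = Finset.univ.biUnion f)
    (β : ℝ) (hβ : β = (B.card : ℝ) / p) (hβ0 : 0 < β)
    (n : ZMod p)
    (hD : nDiamZMod n B < min (1 / 2) (β / (1 - 2 / Real.pi))) :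
    (n.valMinAbs.natAbs : ℝ) ≤ m / (2 * (β - (1 - 2 / Real.pi) * nDiamZMod n B)) := by
  haveI : Fact p.Prime := ⟨hp⟩
  haveI : NeZero p := ⟨hp.ne_zero⟩
  have hπ := Real.pi_pos
  have hπ2 : (2:ℝ) < Real.pi := by nlinarith [Real.pi_gt_three]
  have hc0 : (0:ℝ) < 1 - 2 / Real.pi := by
    have : 2 / Real.pi < 1 := by rw [div_lt_one hπ]; linarith
    linarith
  have hppos : (0:ℝ) < p := by
    have := hp.pos; positivity
  have hpne : (p:ℝ) ≠ 0 := hppos.ne'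
  rw [lt_min_iff] at hD
  obtain ⟨hD1, hD2⟩ := hD
  have hden : 0 < β - (1 - 2 / Real.pi) * nDiamZMod n B := by
    rw [lt_div_iff₀ hc0] at hD2
    nlinarith
  by_cases hn : n = 0
  · subst hn
    rw [ZMod.valMinAbs_zero]
    simp only [Int.natAbs_zero, Nat.cast_zero]
    apply div_nonneg (Nat.cast_nonneg m)
    linarith
  · -- the infimum is attained
    have hmemD : nDiamZMod n B ∈ {x : ℝ | ∃ I : Finset (ZMod p),
        IsIntervalZMod I ∧ n • B ⊆ I ∧ x = (I.card : ℝ) / p} := by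
      rw [nDiamZMod]
      apply Set.Nonempty.csInf_mem
      · refine ⟨(Finset.univ.card : ℝ) / p, Finset.univ, ⟨0, p, ?_⟩, Finset.subset_univ _, rfl⟩
        ext x
        simp only [Finset.mem_univ, true_iff, Finset.mem_image, Finset.mem_range]
        exact ⟨x.val, ZMod.val_lt x, by simp [ZMod.natCast_val, ZMod.cast_id]⟩
      · apply Set.Finite.subset (Set.finite_range
          (fun I : Finset (ZMod p) => (I.card : ℝ) / p))
        rintro x ⟨I, -, -, rfl⟩
        exact ⟨I, rfl⟩
    obtain ⟨I, hIint, hIsub, hIc⟩ := hmemD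
    obtain ⟨a, l, hIeq⟩ := hIint
    have hlp : l < p := by
      by_contra hc
      push_neg at hc
      have huniv : Finset.univ ⊆ I := by
        intro x _
        rw [hIeq]
        refine Finset.mem_image.2 ⟨(x - a).val, Finset.mem_range.2
          (lt_of_lt_of_le (ZMod.val_lt _) hc), ?_⟩
        simp [ZMod.natCast_val, ZMod.cast_id]
      have hIuniv : I = Finset.univ := Finset.eq_univ_of_forall (fun x => huniv (Finset.mem_univ x))
      rw [hIuniv, Finset.card_univ, ZMod.card] at hIc
      rw [hIc] at hD1
      rw [div_self hpne] at hD1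
      linarith
    have hinjl : Set.InjOn (fun j : ℕ => a + (j : ZMod p)) (Finset.range l) := by
      intro j1 h1 j2 h2 h
      simp only at h
      have hv := congrArg ZMod.val (add_left_cancel h)
      rwa [ZMod.val_cast_of_lt (lt_trans (Finset.mem_range.1 h1) hlp),
        ZMod.val_cast_of_lt (lt_trans (Finset.mem_range.1 h2) hlp)] at hv
    have hcardI : I.card = l := by
      rw [hIeq, Finset.card_image_of_injOn hinjl, Finset.card_range]
    have hL : 2 * I.card < p := by
      have h1 : (I.card : ℝ) / p < 1 / 2 := hIc ▸ hD1
      have h2 : (2 * I.card : ℝ) < p := by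
        rw [div_lt_div_iff₀ hppos two_pos] at h1
        linarith
      exact_mod_cast h2
    have hmem : ∀ x ∈ B, (n * x - a).val < I.card := by
      intro x hx
      have h1 : n * x ∈ n • B := by
        rw [show n * x = n • x from rfl]
        exact Finset.smul_mem_smul_finset hx
      have h2 : n * x ∈ I := hIsub h1
      rw [hIeq] at h2
      obtain ⟨j, hj, hjx⟩ := Finset.mem_image.1 h2
      have hjl := Finset.mem_range.1 hj
      have h3 : n * x - a = (j : ZMod p) := by rw [← hjx]; ring
      rw [h3, ZMod.val_cast_of_lt (lt_trans hjl hlp), hcardI]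
      exact hjl
    have hmain := main_aux p hp m f hf B hB n hn a I.card hL hmem
    -- final algebra
    set q : ℕ := n.valMinAbs.natAbs with hq
    have hq1 : 1 ≤ q := by
      rcases Nat.eq_zero_or_pos q with h | h
      · exact absurd (by simpa [hq, Int.natAbs_eq_zero, ZMod.valMinAbs_eq_zero] using h) hn
      · exact h
    have hqpos : (0:ℝ) < q := by exact_mod_cast hq1
    have hBc : (B.card : ℝ) = β * p := by rw [hβ]; field_simp
    have hLr : (I.card : ℝ) = nDiamZMod n B * p := by rw [hIc, div_mul_cancel₀ _ hpne]
    rw [le_div_iff₀ (by linarith : (0:ℝ) < 2 * (β - (1 - 2 / Real.pi) * nDiamZMod n B))]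
    have h2 : ((B.card : ℝ) - (1 - 2 / Real.pi) * I.card) * (2 * q)
        ≤ (m * p / (2 * q)) * (2 * q) :=
      mul_le_mul_of_nonneg_right hmain (by positivity)
    have h3 : ((m : ℝ) * p / (2 * q)) * (2 * q) = m * p := by field_simp
    rw [h3, hBc, hLr] at h2
    have h4 : ((q:ℝ) * (2 * (β - (1 - 2 / Real.pi) * nDiamZMod n B))) * p
        ≤ (m : ℝ) * p := by nlinarith [h2]
    exact le_of_mul_le_mul_right (by linarith [h4]) hppos
end
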